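/- Let (S,T) be a medium and let S and V be two distinct states with Sm = V for some concise message m. Then V̂ \ Ŝ = C(m), where Ŝ, V̂ are the contents of S and V and C(m) is the content of the message m. -/

import Mathlib

open scoped Classical symmDiff

universe u

namespace Media

variable {S : Type u}

/-- The state obtained by applying the message (string of tokens) `m` to the state `s`. -/
def apply (s : S) (m : List (S → S)) : S :=
  m.foldl (fun x τ => τ x) s

/-- The sequence of states `S₀ = s, S₁, …, Sₙ` produced by the message `m` from the state `s`. -/
def produced (s : S) (m : List (S → S)) : List S :=
  m.scanl (fun x τ => τ x) s

/-- `τ'` is a reverse of the token `τ`. -/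
def IsReverse (τ τ' : S → S) : Prop :=
  ∀ P Q : S, P ≠ Q → (τ P = Q ↔ τ' Q = P)

/-- The message `m` is stepwise effective for the state `s`. -/
def StepwiseEffective (s : S) (m : List (S → S)) : Prop :=
  List.Chain' (· ≠ ·) (produced s m)

/-- The message `m` is consistent: it does not contain both a token and its reverse. -/
def Consistent (m : List (S → S)) : Prop :=
  ∀ τ ∈ m, ∀ τ' ∈ m, ¬ IsReverse τ τ'

/-- The message `m` is concise for the state `s`. -/
def Concise (s : S) (m : List (S → S)) : Prop :=
  StepwiseEffective s m ∧ Consistent m ∧ m.Nodup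

/-- The message `m` is vacuous: its indices can be partitioned into pairs of
mutually reverse tokens. -/
def Vacuous (m : List (S → S)) : Prop :=
  ∃ f : Fin m.length → Fin m.length, Function.Involutive f ∧
    (∀ i, f i ≠ i) ∧ ∀ i, IsReverse (m.get i) (m.get (f i))

/-- The message `m` is closed for the state `s`. -/
def Closed (s : S) (m : List (S → S)) : Prop :=
  StepwiseEffective s m ∧ apply s m = s

/-- `(S, T)` is a medium: a token system satisfying axioms [M1] and [M2]. -/
def IsMedium (T : Set (S → S)) : Prop :=
  (∃ a b : S, a ≠ b) ∧ T.Nonempty ∧ (∀ τ ∈ T, τ ≠ id) ∧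
  (∀ P Q : S, P ≠ Q →
    ∃ m : List (S → S), (∀ τ ∈ m, τ ∈ T) ∧ Concise P m ∧ apply P m = Q) ∧
  (∀ (P : S) (m : List (S → S)), (∀ τ ∈ m, τ ∈ T) → Closed P m → Vacuous m)

end Media

namespace Media

variable {S : Type u}

/-- The content of a state: all tokens occurring in at least one concise message
producing that state. -/
def stateContent (T : Set (S → S)) (s : S) : Set (S → S) :=
  {τ | ∃ (W : S) (m : List (S → S)),
    (∀ σ ∈ m, σ ∈ T) ∧ Concise W m ∧ apply W m = s ∧ τ ∈ m}

end Media

open Media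

namespace MediaAux

variable {S : Type u}

lemma apply_nil (s : S) : apply s ([] : List (S → S)) = s := rfl

lemma apply_cons (s : S) (τ : S → S) (m : List (S → S)) :
    apply s (τ :: m) = apply (τ s) m := rfl

lemma apply_append (s : S) (m n : List (S → S)) :
    apply s (m ++ n) = apply (apply s m) n := List.foldl_append

lemma se_nil (s : S) : StepwiseEffective s ([] : List (S → S)) := by
  simp [StepwiseEffective, produced, List.scanl]
  exact List.isChain_singleton _

lemma head?_produced (s : S) (m : List (S → S)) :
    (produced s m).head? = some s := by
  cases m <;> simp [produced, List.scanl]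

lemma se_cons {s : S} {τ : S → S} {m : List (S → S)} :
    StepwiseEffective s (τ :: m) ↔ τ s ≠ s ∧ StepwiseEffective (τ s) m := by
  unfold StepwiseEffective List.Chain'
  rw [show produced s (τ :: m) = s :: produced (τ s) m from List.scanl_cons, List.isChain_cons,
    head?_produced]
  constructor
  · rintro ⟨h1, h2⟩
    exact ⟨fun h => (h1 _ rfl) h.symm, h2⟩
  · rintro ⟨h1, h2⟩
    exact ⟨fun x hx => by simp at hx; subst hx; exact fun h => h1 h.symm, h2⟩

lemma se_append {s : S} {m n : List (S → S)} :
    StepwiseEffective s (m ++ n) ↔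
      StepwiseEffective s m ∧ StepwiseEffective (apply s m) n := by
  induction m generalizing s with
  | nil => simp [se_nil, apply_nil]
  | cons τ t ih =>
      simp only [List.cons_append, se_cons, apply_cons, ih, and_assoc]

lemma isReverse_symm {τ σ : S → S} (h : IsReverse τ σ) : IsReverse σ τ := by
  intro P Q hPQ
  exact ((h Q P hPQ.symm).symm)

lemma isReverse_unique {τ σ σ' : S → S} (h : IsReverse τ σ) (h' : IsReverse τ σ') :
    σ = σ' := by
  funext Q
  by_cases hq : σ Q = Q
  · by_cases hq' : σ' Q = Q
    · rw [hq, hq']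
    · have hne : σ' Q ≠ Q := hq'
      have : τ (σ' Q) = Q := (h' (σ' Q) Q hne).mpr rfl
      have : σ Q = σ' Q := (h (σ' Q) Q hne).mp this
      rw [this]
  · have hne : σ Q ≠ Q := hq
    have h1 : τ (σ Q) = Q := (h (σ Q) Q hne).mpr rfl
    have h2 : σ' Q = σ Q := (h' (σ Q) Q hne).mp h1
    rw [h2]

lemma vacuous_mem {L : List (S → S)} (hv : Vacuous L) {τ : S → S} (hτ : τ ∈ L) :
    ∃ σ ∈ L, IsReverse τ σ := by
  obtain ⟨f, _, _, hrev⟩ := hv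
  obtain ⟨i, hi⟩ := List.get_of_mem hτ
  exact ⟨L.get (f i), L.get_mem _, hi ▸ hrev i⟩

/-- Every token of a medium has a reverse in `T`. -/
lemma exists_reverse {T : Set (S → S)} (hM : IsMedium T) {τ : S → S} (hτ : τ ∈ T) :
    ∃ σ ∈ T, IsReverse τ σ := by
  obtain ⟨_, _, hid, hM1, hM2⟩ := hM
  have : τ ≠ id := hid τ hτ
  have : ∃ P : S, τ P ≠ P := by
    by_contra h
    push_neg at h
    exact this (funext h)
  obtain ⟨P, hP⟩ := this
  obtain ⟨r, hrT, hrc, hra⟩ := hM1 (τ P) P hP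
  have hclosed : Closed P (τ :: r) := by
    refine ⟨se_cons.2 ⟨hP, hrc.1⟩, ?_⟩
    rw [apply_cons, hra]
  have hT : ∀ σ ∈ τ :: r, σ ∈ T := by
    intro σ hσ
    rcases List.mem_cons.1 hσ with h | h
    · exact h ▸ hτ
    · exact hrT σ h
  have hvac := hM2 P (τ :: r) hT hclosed
  obtain ⟨σ, hσmem, hσrev⟩ := vacuous_mem hvac List.mem_cons_self
  exact ⟨σ, hT σ hσmem, hσrev⟩

/-- A canonical reverse function. -/
noncomputable def rev (T : Set (S → S)) (τ : S → S) : S → S :=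
  if h : ∃ σ, σ ∈ T ∧ IsReverse τ σ then h.choose else id

lemma rev_spec {T : Set (S → S)} (hM : IsMedium T) {τ : S → S} (hτ : τ ∈ T) :
    rev T τ ∈ T ∧ IsReverse τ (rev T τ) := by
  obtain ⟨σ, hσT, hσ⟩ := exists_reverse hM hτ
  have h : ∃ σ, σ ∈ T ∧ IsReverse τ σ := ⟨σ, hσT, hσ⟩
  rw [rev, dif_pos h]
  exact ⟨h.choose_spec.1, h.choose_spec.2⟩

/-- reversal of a stepwise effective message. -/
lemma reversal {T : Set (S → S)} (hM : IsMedium T) :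
    ∀ (m : List (S → S)) (s : S), (∀ τ ∈ m, τ ∈ T) → StepwiseEffective s m →
      StepwiseEffective (apply s m) ((m.map (rev T)).reverse) ∧
      apply (apply s m) ((m.map (rev T)).reverse) = s := by
  intro m
  induction m with
  | nil => intro s _ _; simpa using ⟨se_nil s, rfl⟩
  | cons τ t ih =>
      intro s hT hse
      rw [se_cons] at hse
      obtain ⟨hstep, hse'⟩ := hse
      obtain ⟨ih1, ih2⟩ := ih (τ s) (fun σ hσ => hT σ (List.mem_cons_of_mem _ hσ)) hse'
      have hrev := (rev_spec hM (hT τ List.mem_cons_self)).2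
      have hback : rev T τ (τ s) = s := (hrev s (τ s) (Ne.symm hstep)).mp rfl
      constructor
      · rw [List.map_cons, List.reverse_cons, se_append]
        refine ⟨by rw [apply_cons]; exact ih1, ?_⟩
        rw [apply_cons, ih2]
        rw [se_cons]
        refine ⟨?_, se_nil _⟩
        rw [hback]; exact Ne.symm hstep
      · rw [List.map_cons, List.reverse_cons, apply_append, apply_cons s τ t, ih2,
          apply_cons, apply_nil, hback]

lemma two_le_count_of_lt {α : Type*} [DecidableEq α] :
    ∀ (L : List α) (i j : ℕ), i < j → (hj : j < L.length) → (hi : i < L.length) →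
      ∀ a : α, L[i] = a → L[j] = a → 2 ≤ L.count a := by
  intro L
  induction L with
  | nil => intro i j _ hj; simp at hj
  | cons b t ih =>
      intro i j hij hj hi a ha hb
      cases i with
      | zero =>
          simp at ha
          subst ha
          have hjt : j - 1 < t.length := by
            simp at hj; omega
          have : t[j-1] = b := by
            have : (b :: t)[j] = t[j-1] := by
              cases j with
              | zero => omega
              | succ k => simp
            rw [hb] at this; exact this.symm
          have hmem : b ∈ t := this ▸ List.getElem_mem hjt
          rw [List.count_cons_self]
          have := List.count_pos_iff.2 hmem
          omega
      | succ k =>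
          cases j with
          | zero => omega
          | succ l =>
              have h2 : t.count a ≥ 2 := by
                refine ih k l (by omega) (by simp at hj; omega) (by simp at hi; omega) a ?_ ?_
                · simpa using ha
                · simpa using hb
              calc (2 : ℕ) ≤ t.count a := h2
                _ ≤ (b :: t).count a := by rw [List.count_cons]; omega

end MediaAux

namespace MediaAux2
open MediaAux

variable {S : Type u}

/-- Key lemma: contents of consecutive concise messages are disjoint. -/
lemma content_disjoint {T : Set (S → S)} (hM : IsMedium T) {w s v : S}
    {n m : List (S → S)}
    (hnT : ∀ τ ∈ n, τ ∈ T) (hnc : Concise w n) (hna : apply w n = s)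
    (hmT : ∀ τ ∈ m, τ ∈ T) (hmc : Concise s m) (hma : apply s m = v)
    {τ : S → S} (hτn : τ ∈ n) (hτm : τ ∈ m) : False := by
  classical
  -- choose a concise message p from v back to w
  obtain ⟨p, hpT, hpc, hpa⟩ :
      ∃ p : List (S → S), (∀ σ ∈ p, σ ∈ T) ∧ Concise v p ∧ apply v p = w := by
    by_cases hvw : v = w
    · exact ⟨[], by simp, ⟨se_nil v, by simp [Consistent], List.nodup_nil⟩, by
        rw [apply_nil, hvw]⟩
    · obtain ⟨p, h1, h2, h3⟩ := hM.2.2.2.1 v w hvw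
      exact ⟨p, h1, h2, h3⟩
  set L : List (S → S) := n ++ (m ++ p) with hL
  have hLT : ∀ σ ∈ L, σ ∈ T := by
    intro σ hσ
    simp only [hL, List.mem_append] at hσ
    rcases hσ with (h | h | h)
    exacts [hnT σ h, hmT σ h, hpT σ h]
  have hLclosed : Closed w L := by
    constructor
    · rw [hL, se_append, se_append, hna, hma]
      exact ⟨hnc.1, hmc.1, hpc.1⟩
    · rw [hL, apply_append, apply_append, hna, hma, hpa]
  have hvac : Vacuous L := hM.2.2.2.2 w L hLT hLclosed
  obtain ⟨f, hfinv, hfne, hfrev⟩ := hvac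
  -- the reverse of τ
  have hτT : τ ∈ T := hnT τ hτn
  obtain ⟨hρT, hρrev⟩ := rev_spec hM hτT
  set ρ := rev T τ with hρ
  have hτρ : τ ≠ ρ := by
    intro h
    exact hnc.2.1 τ hτn τ hτn (h ▸ hρrev)
  have hρn : ρ ∉ n := fun h => hnc.2.1 τ hτn ρ h hρrev
  have hρm : ρ ∉ m := fun h => hmc.2.1 τ hτm ρ h hρrev
  -- indices of the two occurrences of τ in L
  obtain ⟨⟨i, hi⟩, hgi⟩ := List.get_of_mem hτn
  obtain ⟨⟨j, hj⟩, hgj⟩ := List.get_of_mem hτm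
  have hiL : i < L.length := by simp [hL]; omega
  have hjL : n.length + j < L.length := by simp [hL]; omega
  set i₁ : Fin L.length := ⟨i, hiL⟩ with hi₁
  set i₂ : Fin L.length := ⟨n.length + j, hjL⟩ with hi₂
  have hgete1 : L.get i₁ = τ := by
    have : L[i] = n[i] := List.getElem_append_left hi
    show L[i]'hiL = τ
    rw [this]
    simpa using hgi
  have hgete2 : L.get i₂ = τ := by
    have h1 : L[n.length + j]'hjL = (m ++ p)[n.length + j - n.length]'(by
        simp; omega) := by
      apply List.getElem_append_right
      omega
    have h2 : (m ++ p)[n.length + j - n.length]'(by simp; omega) = m[j]'hj := by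
      have : n.length + j - n.length = j := by omega
      simp only [this]
      exact List.getElem_append_left hj
    show L[n.length + j]'hjL = τ
    rw [h1, h2]
    exact hgj
  have hne12 : i₁ ≠ i₂ := by
    intro h
    have : i = n.length + j := congrArg Fin.val h
    omega
  have hfne12 : f i₁ ≠ f i₂ := fun h => hne12 (hfinv.injective h)
  have hρ1 : L.get (f i₁) = ρ :=
    isReverse_unique (hgete1 ▸ hfrev i₁) hρrev
  have hρ2 : L.get (f i₂) = ρ :=
    isReverse_unique (hgete2 ▸ hfrev i₂) hρrev
  -- so ρ occurs twice in L
  have hcount : 2 ≤ L.count ρ := by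
    rcases lt_or_gt_of_ne (fun h : (f i₁ : ℕ) = (f i₂ : ℕ) => hfne12 (Fin.ext h)) with h | h
    · exact two_le_count_of_lt L (f i₁) (f i₂) h (f i₂).isLt (f i₁).isLt ρ hρ1 hρ2
    · exact two_le_count_of_lt L (f i₂) (f i₁) h (f i₁).isLt (f i₂).isLt ρ hρ2 hρ1
  have hcountL : L.count ρ = p.count ρ := by
    rw [hL, List.count_append, List.count_append,
      List.count_eq_zero_of_not_mem hρn, List.count_eq_zero_of_not_mem hρm]
    omega
  rw [hcountL] at hcount
  have := List.nodup_iff_count_le_one.1 hpc.2.2 ρ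
  omega

/-- Key lemma: every token of a concise message into `v` lies in `ŝ ∪ C(m)`,
where `m` is concise from `s` to `v`. -/
lemma mem_stateContent_or {T : Set (S → S)} (hM : IsMedium T) {u s v : S}
    {m p : List (S → S)}
    (hmT : ∀ σ ∈ m, σ ∈ T) (hmc : Concise s m) (hma : apply s m = v)
    (hpT : ∀ σ ∈ p, σ ∈ T) (hpc : Concise u p) (hpa : apply u p = v)
    {τ : S → S} (hτp : τ ∈ p) : τ ∈ stateContent T s ∨ τ ∈ m := by
  classical
  -- choose a concise message q from u to s
  obtain ⟨q, hqT, hqc, hqa⟩ :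
      ∃ q : List (S → S), (∀ σ ∈ q, σ ∈ T) ∧ Concise u q ∧ apply u q = s := by
    by_cases hus : u = s
    · exact ⟨[], by simp, ⟨se_nil u, by simp [Consistent], List.nodup_nil⟩, by
        rw [apply_nil, hus]⟩
    · obtain ⟨q, h1, h2, h3⟩ := hM.2.2.2.1 u s hus
      exact ⟨q, h1, h2, h3⟩
  set mt : List (S → S) := (m.map (rev T)).reverse with hmt
  set qt : List (S → S) := (q.map (rev T)).reverse with hqt
  obtain ⟨hmt1, hmt2⟩ := reversal hM m s hmT hmc.1
  obtain ⟨hqt1, hqt2⟩ := reversal hM q u hqT hqc.1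
  rw [hma] at hmt1 hmt2
  rw [hqa] at hqt1 hqt2
  set L : List (S → S) := p ++ (mt ++ qt) with hL
  have hLT : ∀ σ ∈ L, σ ∈ T := by
    intro σ hσ
    simp only [hL, hmt, hqt, List.mem_append, List.mem_reverse, List.mem_map] at hσ
    rcases hσ with (h | ⟨κ, hκ, hκ2⟩ | ⟨κ, hκ, hκ2⟩)
    · exact hpT σ h
    · exact hκ2 ▸ (rev_spec hM (hmT κ hκ)).1
    · exact hκ2 ▸ (rev_spec hM (hqT κ hκ)).1
  have hLclosed : Closed u L := by
    constructor
    · rw [hL, se_append, se_append, hpa, hmt2]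
      exact ⟨hpc.1, hmt1, hqt1⟩
    · rw [hL, apply_append, apply_append, hpa, hmt2, hqt2]
  have hvac : Vacuous L := hM.2.2.2.2 u L hLT hLclosed
  have hτL : τ ∈ L := by simp [hL, hτp]
  obtain ⟨σ, hσL, hσrev⟩ := vacuous_mem hvac hτL
  have hτT : τ ∈ T := hpT τ hτp
  obtain ⟨hρT, hρrev⟩ := rev_spec hM hτT
  have hσρ : σ = rev T τ := isReverse_unique hσrev hρrev
  subst hσρ
  simp only [hL, hmt, hqt, List.mem_append, List.mem_reverse, List.mem_map] at hσL
  rcases hσL with (h | ⟨κ, hκ, hκ2⟩ | ⟨κ, hκ, hκ2⟩)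
  · exact absurd hσrev (hpc.2.1 τ hτp _ h)
  · -- rev T τ = rev T κ with κ ∈ m, hence τ = κ
    right
    have hκrev := (rev_spec hM (hmT κ hκ)).2
    rw [hκ2] at hκrev
    have : τ = κ := isReverse_unique (isReverse_symm hσrev) (isReverse_symm hκrev)
    exact this ▸ hκ
  · left
    have hκrev := (rev_spec hM (hqT κ hκ)).2
    rw [hκ2] at hκrev
    have : τ = κ := isReverse_unique (isReverse_symm hσrev) (isReverse_symm hκrev)
    exact ⟨u, q, hqT, hqc, hqa, this ▸ hκ⟩

end MediaAux2

/-- Theorem 8.2: if `s` and `v` are distinct states with `s·m = v` for a concise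
message `m`, then `v̂ \ ŝ = C(m)`. -/
theorem content_diff_eq_message_content {S : Type u} {T : Set (S → S)}
    (hM : IsMedium T) (s v : S) (hsv : s ≠ v) (m : List (S → S))
    (hm : ∀ τ ∈ m, τ ∈ T) (hmc : Concise s m) (hsm : apply s m = v) :
    stateContent T v \ stateContent T s = {τ | τ ∈ m} := by
  ext τ
  simp only [Set.mem_diff, Set.mem_setOf_eq]
  constructor
  · rintro ⟨⟨u, p, hpT, hpc, hpa, hτp⟩, hnS⟩
    rcases MediaAux2.mem_stateContent_or hM hm hmc hsm hpT hpc hpa hτp with h | h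
    · exact absurd h hnS
    · exact h
  · intro hτm
    refine ⟨⟨s, m, hm, hmc, hsm, hτm⟩, ?_⟩
    rintro ⟨w, n, hnT, hnc, hna, hτn⟩
    exact MediaAux2.content_disjoint hM hnT hnc hna hm hmc hsm hτn hτm
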